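/- Every graph of NLC-width at most k has clique-width at most 2k. -/

import Mathlib

open SimpleGraph

/-- Edge insertion `η_{a,b}`: add all edges between vertices labeled `a` and `b`. -/
def etaG {V : Type} {k : ℕ} (G : SimpleGraph V) (lab : V → Fin k) (a b : Fin k) :
    SimpleGraph V where
  Adj x y := G.Adj x y ∨ (x ≠ y ∧ ((lab x = a ∧ lab y = b) ∨ (lab x = b ∧ lab y = a)))
  symm := by
    constructor
    intro x y h
    rcases h with h | ⟨hxy, h⟩
    · exact Or.inl h.symm
    · rcases h with ⟨h1,h2⟩|⟨h1,h2⟩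
      · exact Or.inr ⟨hxy.symm, Or.inr ⟨h2,h1⟩⟩
      · exact Or.inr ⟨hxy.symm, Or.inl ⟨h2,h1⟩⟩
  loopless := by
    constructor
    intro x h
    rcases h with h | ⟨hxx, _⟩
    · exact G.irrefl h
    · exact hxx rfl

/-- NLC-width union operation `×_S`. -/
def nlcJoin {V W : Type} {k : ℕ} (G : SimpleGraph V) (H : SimpleGraph W)
    (labG : V → Fin k) (labH : W → Fin k) (S : Set (Fin k × Fin k)) :
    SimpleGraph (V ⊕ W) where
  Adj x y := match x, y with
    | .inl a, .inl b => G.Adj a b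
    | .inr a, .inr b => H.Adj a b
    | .inl a, .inr b => (labG a, labH b) ∈ S
    | .inr a, .inl b => (labG b, labH a) ∈ S
  symm := by
    constructor
    rintro (a | a) (b | b) h
    · exact G.adj_symm h
    · exact h
    · exact h
    · exact H.adj_symm h
  loopless := by
    constructor
    rintro (a | a) h
    · exact G.irrefl h
    · exact H.irrefl h

/-- Labeled graphs constructible by clique-width operations with labels in `Fin k`. -/
inductive CWBuild (k : ℕ) : {V : Type} → SimpleGraph V → (V → Fin k) → Prop
  | single (a : Fin k) : CWBuild k (⊥ : SimpleGraph PUnit) (fun _ => a)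
  | union {V W : Type} {G : SimpleGraph V} {H : SimpleGraph W}
      {labG : V → Fin k} {labH : W → Fin k} :
      CWBuild k G labG → CWBuild k H labH →
      CWBuild k (G ⊕g H) (Sum.elim labG labH)
  | insertEdges {V : Type} {G : SimpleGraph V} {lab : V → Fin k} (a b : Fin k)
      (hab : a ≠ b) : CWBuild k G lab → CWBuild k (etaG G lab a b) lab
  | relabel {V : Type} {G : SimpleGraph V} {lab : V → Fin k} (a b : Fin k) :
      CWBuild k G lab → CWBuild k G (fun v => if lab v = a then b else lab v)

/-- `G` is definable by a clique-width `k`-expression. -/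
def HasCW (k : ℕ) {V : Type} (G : SimpleGraph V) : Prop :=
  ∃ (W : Type) (H : SimpleGraph W) (lab : W → Fin k),
    CWBuild k H lab ∧ Nonempty (G ≃g H)

/-- The clique-width of `G`. -/
noncomputable def cliquewidth {V : Type} (G : SimpleGraph V) : ℕ :=
  sInf {k | HasCW k G}

/-- Labeled graphs constructible by NLC-width operations with labels in `Fin k`. -/
inductive NLCBuild (k : ℕ) : {V : Type} → SimpleGraph V → (V → Fin k) → Prop
  | single (a : Fin k) : NLCBuild k (⊥ : SimpleGraph PUnit) (fun _ => a)
  | join {V W : Type} {G : SimpleGraph V} {H : SimpleGraph W}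
      {labG : V → Fin k} {labH : W → Fin k} (S : Set (Fin k × Fin k)) :
      NLCBuild k G labG → NLCBuild k H labH →
      NLCBuild k (nlcJoin G H labG labH S) (Sum.elim labG labH)
  | relabel {V : Type} {G : SimpleGraph V} {lab : V → Fin k} (R : Fin k → Fin k) :
      NLCBuild k G lab → NLCBuild k G (R ∘ lab)

/-- `G` is definable by an NLC-width `k`-expression. -/
def HasNLC (k : ℕ) {V : Type} (G : SimpleGraph V) : Prop :=
  ∃ (W : Type) (H : SimpleGraph W) (lab : W → Fin k),
    NLCBuild k H lab ∧ Nonempty (G ≃g H)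

/-- The NLC-width of `G`. -/
noncomputable def nlcwidth {V : Type} (G : SimpleGraph V) : ℕ :=
  sInf {k | HasNLC k G}

/-! ### Auxiliary material for the proof -/

section Aux

open Classical

/-- Embed `Fin m` into the first half of `Fin (2*m)`. -/
def emb2 {m : ℕ} (a : Fin m) : Fin (2 * m) := ⟨a.val, by omega⟩

/-- Embed `Fin m` into the second half of `Fin (2*m)`. -/
def shf2 {m : ℕ} (a : Fin m) : Fin (2 * m) := ⟨a.val + m, by omega⟩

lemma emb2_inj {m : ℕ} : Function.Injective (emb2 (m := m)) := by
  intro a b h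
  simpa [emb2, Fin.ext_iff] using h

lemma shf2_inj {m : ℕ} : Function.Injective (shf2 (m := m)) := by
  intro a b h
  simp only [shf2, Fin.mk.injEq, Nat.add_right_cancel_iff] at h
  exact Fin.ext h

@[simp] lemma shf2_ne_emb2 {m : ℕ} (a b : Fin m) : shf2 a ≠ emb2 b := by
  simp only [shf2, emb2, ne_eq, Fin.mk.injEq]
  omega

@[simp] lemma emb2_ne_shf2 {m : ℕ} (a b : Fin m) : emb2 a ≠ shf2 b :=
  fun h => shf2_ne_emb2 b a h.symm

/-- One elementary relabeling step. -/
def stp {K : ℕ} (x : Fin K) (p : Fin K × Fin K) : Fin K := if x = p.1 then p.2 else x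

/-- `CWBuild` is closed under any sequence of elementary relabelings. -/
lemma relabelFold {K : ℕ} {V : Type} {G : SimpleGraph V} :
    ∀ (L : List (Fin K × Fin K)) {lab : V → Fin K}, CWBuild K G lab →
      CWBuild K G (fun v => L.foldl stp (lab v))
  | [], lab, h => h
  | p :: L, lab, h => relabelFold L (CWBuild.relabel p.1 p.2 h)

lemma foldl_stp_fix {K : ℕ} :
    ∀ (L : List (Fin K × Fin K)) (x : Fin K), (∀ p ∈ L, x ≠ p.1) → L.foldl stp x = x
  | [], x, _ => rfl
  | p :: L, x, hx => by
      have h1 : stp x p = x := by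
        simp [stp, hx p List.mem_cons_self]
      rw [List.foldl_cons, h1]
      exact foldl_stp_fix L x fun q hq => hx q (List.mem_cons_of_mem p hq)

/-- The relabeling list moving labels from `φ`-range to `ψ`-range along `R`. -/
def mvList {m K : ℕ} (φ ψ : Fin m → Fin K) (R : Fin m → Fin m) : List (Fin K × Fin K) :=
  (List.finRange m).map (fun a => (φ a, ψ (R a)))

lemma foldl_move_aux {m K : ℕ} (φ ψ : Fin m → Fin K) (hφ : Function.Injective φ)
    (hd : ∀ a b, ψ a ≠ φ b) (R : Fin m → Fin m) :
    ∀ (l : List (Fin m)), ∀ c ∈ l,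
      ((l.map (fun a => (φ a, ψ (R a)))).foldl stp (φ c)) = ψ (R c)
  | [], c, hc => absurd hc List.not_mem_nil
  | a :: l, c, hc => by
      rw [List.map_cons, List.foldl_cons]
      by_cases hca : c = a
      · subst hca
        have h1 : stp (φ c) (φ c, ψ (R c)) = ψ (R c) := by simp [stp]
        rw [h1]
        exact foldl_stp_fix _ _ (by
          intro p hp
          simp only [List.mem_map] at hp
          obtain ⟨b, _, rfl⟩ := hp
          exact hd (R c) b)
      · have hne : φ c ≠ φ a := fun h => hca (hφ h)
        have h1 : stp (φ c) (φ a, ψ (R a)) = φ c := by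
          simp [stp, hne]
        rw [h1]
        have hc' : c ∈ l := by
          rcases List.mem_cons.mp hc with h | h
          · exact absurd h hca
          · exact h
        exact foldl_move_aux φ ψ hφ hd R l c hc'

lemma mvList_src {m K : ℕ} (φ ψ : Fin m → Fin K) (hφ : Function.Injective φ)
    (hd : ∀ a b, ψ a ≠ φ b) (R : Fin m → Fin m) (c : Fin m) :
    (mvList φ ψ R).foldl stp (φ c) = ψ (R c) :=
  foldl_move_aux φ ψ hφ hd R (List.finRange m) c (List.mem_finRange c)

lemma mvList_tgt {m K : ℕ} (φ ψ : Fin m → Fin K)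
    (hd : ∀ a b, ψ a ≠ φ b) (R : Fin m → Fin m) (c : Fin m) :
    (mvList φ ψ R).foldl stp (ψ c) = ψ c := by
  apply foldl_stp_fix
  intro p hp
  simp only [mvList, List.mem_map] at hp
  obtain ⟨b, _, rfl⟩ := hp
  exact hd c b

/-- Disjoint sum is the NLC join with the empty set. -/
lemma sum_eq_nlcJoin {m : ℕ} {V W : Type} (G : SimpleGraph V) (H : SimpleGraph W)
    (labG : V → Fin m) (labH : W → Fin m) :
    G ⊕g H = nlcJoin G H labG labH (∅ : Set (Fin m × Fin m)) := by
  ext x y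
  cases x <;> cases y <;> simp [SimpleGraph.sum, nlcJoin]

lemma etaG_nlcJoin {m : ℕ} {V W : Type} (G : SimpleGraph V) (H : SimpleGraph W)
    (labG : V → Fin m) (labH : W → Fin m) (S₀ : Set (Fin m × Fin m)) (a b : Fin m) :
    etaG (nlcJoin G H labG labH S₀) (Sum.elim (emb2 ∘ labG) (shf2 ∘ labH)) (emb2 a) (shf2 b)
      = nlcJoin G H labG labH (insert (a, b) S₀) := by
  ext x y
  cases x <;> cases y <;>
    simp only [etaG, nlcJoin, Sum.elim_inl, Sum.elim_inr, Function.comp_apply,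
      Set.mem_insert_iff, Prod.mk.injEq, ne_eq, Sum.inl.injEq, Sum.inr.injEq,
      emb2_ne_shf2, shf2_ne_emb2, emb2_inj.eq_iff, shf2_inj.eq_iff, reduceCtorEq,
      not_false_eq_true, true_and, false_and, and_false, or_false, false_or] <;>
    tauto

/-- Inserting all the edges required by an NLC join, one label pair at a time. -/
lemma insertAll {m : ℕ} {V W : Type} {G : SimpleGraph V} {H : SimpleGraph W}
    {labG : V → Fin m} {labH : W → Fin m} :
    ∀ (L : List (Fin m × Fin m)) (S₀ : Set (Fin m × Fin m)),
      CWBuild (2 * m) (nlcJoin G H labG labH S₀) (Sum.elim (emb2 ∘ labG) (shf2 ∘ labH)) →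
      CWBuild (2 * m) (nlcJoin G H labG labH (S₀ ∪ {p | p ∈ L}))
        (Sum.elim (emb2 ∘ labG) (shf2 ∘ labH))
  | [], S₀, h => by
      have hs : S₀ ∪ {p | p ∈ ([] : List (Fin m × Fin m))} = S₀ := by
        ext p; simp
      rw [hs]
      exact h
  | (a, b) :: L, S₀, h => by
      have h1 := CWBuild.insertEdges (emb2 a) (shf2 b) (emb2_ne_shf2 a b) h
      rw [etaG_nlcJoin] at h1
      have h2 := insertAll L (insert (a, b) S₀) h1
      have hs : insert (a, b) S₀ ∪ {p | p ∈ L} = S₀ ∪ {p | p ∈ (a, b) :: L} := by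
        ext p
        simp only [Set.mem_union, Set.mem_insert_iff, Set.mem_setOf_eq, List.mem_cons]
        tauto
      rwa [hs] at h2

/-- The key simulation: every NLC `m`-buildable labeled graph is CW `2m`-buildable. -/
lemma nlc_to_cw {m : ℕ} {V : Type} {G : SimpleGraph V} {lab : V → Fin m}
    (h : NLCBuild m G lab) : CWBuild (2 * m) G (emb2 ∘ lab) := by
  induction h with
  | single a => exact CWBuild.single (emb2 a)
  | @join V W G H labG labH S hG hH ihG ihH =>
      -- move the labels of H into the second half
      have hH2 : CWBuild (2 * m) H (shf2 ∘ labH) := by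
        have h1 := relabelFold (mvList emb2 shf2 id) ihH
        have heq : (fun w => (mvList emb2 shf2 id).foldl stp ((emb2 ∘ labH) w))
            = shf2 ∘ labH := by
          funext w
          exact mvList_src emb2 shf2 emb2_inj shf2_ne_emb2 id (labH w)
        rwa [heq] at h1
      have hu := CWBuild.union ihG hH2
      rw [sum_eq_nlcJoin G H labG labH] at hu
      -- insert all the join edges
      have hSfin : S.Finite := Set.toFinite S
      set L : List (Fin m × Fin m) := hSfin.toFinset.toList with hL
      have hLS : ({p | p ∈ L} : Set (Fin m × Fin m)) = S := by
        ext p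
        simp only [hL, Set.mem_setOf_eq, Finset.mem_toList, Set.Finite.mem_toFinset]
      have he := insertAll L ∅ hu
      rw [Set.empty_union, hLS] at he
      -- move the labels of H back into the first half
      have h2 := relabelFold (mvList shf2 emb2 id) he
      have heq2 : (fun v => (mvList shf2 emb2 id).foldl stp
            (Sum.elim (emb2 ∘ labG) (shf2 ∘ labH) v))
          = emb2 ∘ Sum.elim labG labH := by
        funext v
        cases v with
        | inl u => exact mvList_tgt shf2 emb2 emb2_ne_shf2 id (labG u)
        | inr w => exact mvList_src shf2 emb2 shf2_inj emb2_ne_shf2 id (labH w)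
      rwa [heq2] at h2
  | @relabel V G lab R hG ih =>
      have h1 := relabelFold (mvList emb2 shf2 R ++ mvList shf2 emb2 id) ih
      have heq : (fun v => (mvList emb2 shf2 R ++ mvList shf2 emb2 id).foldl stp
            ((emb2 ∘ lab) v)) = emb2 ∘ (R ∘ lab) := by
        funext v
        rw [List.foldl_append]
        rw [show (mvList emb2 shf2 R).foldl stp ((emb2 ∘ lab) v) = shf2 (R (lab v)) from
          mvList_src emb2 shf2 emb2_inj shf2_ne_emb2 R (lab v)]
        exact mvList_src shf2 emb2 shf2_inj emb2_ne_shf2 id (R (lab v))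
      rwa [heq] at h1

/-- Everything CW-buildable has a nonempty vertex type. -/
lemma CWBuild.nonempty {K : ℕ} {V : Type} {G : SimpleGraph V} {lab : V → Fin K}
    (h : CWBuild K G lab) : Nonempty V := by
  induction h with
  | single a => exact ⟨PUnit.unit⟩
  | union _ _ ih1 _ => exact ⟨Sum.inl ih1.some⟩
  | insertEdges _ _ _ _ ih => exact ih
  | relabel _ _ _ ih => exact ih

/-- Every finite nonempty graph admits an NLC expression (with `card V` labels). -/
lemma existsNLC (N : ℕ) : ∀ (n : ℕ) (_hn : n < N), ∀ (G : SimpleGraph (Fin (n + 1))),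
    ∃ (W : Type) (H : SimpleGraph W) (lab : W → Fin N) (e : Fin (n + 1) ≃ W),
      NLCBuild N H lab ∧ (∀ i j, G.Adj i j ↔ H.Adj (e i) (e j)) ∧
        (∀ i : Fin (n + 1), lab (e i) = ⟨i.val, by omega⟩) := by
  intro n
  induction n with
  | zero =>
      intro hN G
      refine ⟨PUnit, ⊥, fun _ => ⟨0, hN⟩, Equiv.equivPUnit (Fin 1), NLCBuild.single _, ?_, ?_⟩
      · intro i j
        have : i = j := Fin.ext (by omega)
        subst this
        simp
      · intro i
        have : i.val = 0 := by omega
        simp [this]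
  | succ n ih =>
      intro hN G
      obtain ⟨W, H, lab, e, hb, hadj, hlab⟩ :=
        ih (by omega) (G.comap Fin.castSucc)
      set ln1 : Fin N := ⟨n + 1, hN⟩ with hln1
      set S : Set (Fin N × Fin N) :=
        {p | ∃ i : Fin (n + 1), p.1 = (⟨i.val, by omega⟩ : Fin N) ∧
          G.Adj i.castSucc (Fin.last (n + 1))} with hS
      refine ⟨W ⊕ PUnit, nlcJoin H ⊥ lab (fun _ => ln1) S, Sum.elim lab (fun _ => ln1),
        (finSumFinEquiv (m := n + 1) (n := 1)).symm.trans
          (Equiv.sumCongr e (Equiv.equivPUnit (Fin 1))),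
        NLCBuild.join S hb (NLCBuild.single ln1), ?_, ?_⟩
      · intro i j
        induction i using Fin.lastCases with
        | cast a =>
            induction j using Fin.lastCases with
            | cast b =>
                have h1 : a.castSucc = Fin.castAdd 1 a := rfl
                have h2 : b.castSucc = Fin.castAdd 1 b := rfl
                rw [h1, h2]
                simp only [Equiv.trans_apply, finSumFinEquiv_symm_apply_castAdd,
                  Equiv.sumCongr_apply, Sum.map_inl]
                rw [show ∀ x y, (nlcJoin H ⊥ lab (fun _ => ln1) S).Adj (Sum.inl x) (Sum.inl y)
                    ↔ H.Adj x y from fun _ _ => Iff.rfl]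
                exact hadj a b
            | last =>
                have h2 : (Fin.last (n + 1)) = Fin.natAdd (n + 1) (0 : Fin 1) := by
                  apply Fin.ext; simp
                have h1 : a.castSucc = Fin.castAdd 1 a := rfl
                rw [h1, h2]
                simp only [Equiv.trans_apply, finSumFinEquiv_symm_apply_castAdd,
                  finSumFinEquiv_symm_apply_natAdd, Equiv.sumCongr_apply, Sum.map_inl,
                  Sum.map_inr]
                rw [show ∀ x y, (nlcJoin H ⊥ lab (fun _ => ln1) S).Adj (Sum.inl x) (Sum.inr y)
                    ↔ (lab x, ln1) ∈ S from fun _ _ => Iff.rfl]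
                rw [hlab a]
                constructor
                · intro hAdj
                  rw [← h1, ← h2] at hAdj
                  exact ⟨a, rfl, hAdj⟩
                · rintro ⟨i, hi1, hi2⟩
                  have : i = a := by
                    apply Fin.ext
                    have := congrArg Fin.val hi1
                    simpa using this.symm
                  subst this
                  rwa [h1, h2] at hi2
        | last =>
            induction j using Fin.lastCases with
            | cast b =>
                have h2 : (Fin.last (n + 1)) = Fin.natAdd (n + 1) (0 : Fin 1) := by
                  apply Fin.ext; simp
                have h1 : b.castSucc = Fin.castAdd 1 b := rfl
                rw [h1, h2]
                simp only [Equiv.trans_apply, finSumFinEquiv_symm_apply_castAdd,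
                  finSumFinEquiv_symm_apply_natAdd, Equiv.sumCongr_apply, Sum.map_inl,
                  Sum.map_inr]
                rw [show ∀ x y, (nlcJoin H ⊥ lab (fun _ => ln1) S).Adj (Sum.inr y) (Sum.inl x)
                    ↔ (lab x, ln1) ∈ S from fun _ _ => Iff.rfl]
                rw [hlab b]
                rw [G.adj_comm]
                constructor
                · intro hAdj
                  rw [← h1, ← h2] at hAdj
                  exact ⟨b, rfl, hAdj⟩
                · rintro ⟨i, hi1, hi2⟩
                  have : i = b := by
                    apply Fin.ext
                    have := congrArg Fin.val hi1
                    simpa using this.symm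
                  subst this
                  rwa [h1, h2] at hi2
            | last =>
                simp only [SimpleGraph.irrefl, false_iff]
      · intro i
        induction i using Fin.lastCases with
        | cast a =>
            have h1 : a.castSucc = Fin.castAdd 1 a := rfl
            rw [h1]
            simp only [Equiv.trans_apply, finSumFinEquiv_symm_apply_castAdd,
              Equiv.sumCongr_apply, Sum.map_inl, Sum.elim_inl]
            rw [hlab a]
            simp [Fin.ext_iff]
        | last =>
            have h2 : (Fin.last (n + 1)) = Fin.natAdd (n + 1) (0 : Fin 1) := by
              apply Fin.ext; simp
            rw [h2]
            simp only [Equiv.trans_apply, finSumFinEquiv_symm_apply_natAdd,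
              Equiv.sumCongr_apply, Sum.map_inr, Sum.elim_inr]
            apply Fin.ext
            simp [hln1, h2]

lemma hasNLC_card {V : Type} [Fintype V] [Nonempty V] (G : SimpleGraph V) :
    HasNLC (Fintype.card V) G := by
  obtain ⟨n, hn⟩ : ∃ n, Fintype.card V = n + 1 :=
    ⟨Fintype.card V - 1, by have := Fintype.card_pos (α := V); omega⟩
  have eV : V ≃ Fin (n + 1) := Fintype.equivFinOfCardEq hn
  obtain ⟨W, H, lab, e, hb, hadj, _⟩ :=
    existsNLC (Fintype.card V) n (by omega) (G.comap eV.symm)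
  refine ⟨W, H, lab, hb, ⟨⟨eV.trans e, ?_⟩⟩⟩
  intro u v
  simp only [Equiv.trans_apply]
  rw [← hadj (eV u) (eV v)]
  simp [SimpleGraph.comap]

end Aux

/-- Every graph of NLC-width at most `k` has clique-width at most `2 * k`. -/
theorem cliquewidth_le_two_mul_nlcwidth {V : Type} [Fintype V] (G : SimpleGraph V)
    (k : ℕ) (h : nlcwidth G ≤ k) : cliquewidth G ≤ 2 * k := by
  by_cases hV : Nonempty V
  · have h1 : HasNLC (Fintype.card V) G := hasNLC_card G
    have hne : Set.Nonempty {k | HasNLC k G} := ⟨_, h1⟩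
    have hmem : HasNLC (nlcwidth G) G := Nat.sInf_mem hne
    obtain ⟨W, H, lab, hb, ⟨iso⟩⟩ := hmem
    have hcw : HasCW (2 * nlcwidth G) G := ⟨W, H, _, nlc_to_cw hb, ⟨iso⟩⟩
    calc cliquewidth G ≤ 2 * nlcwidth G := Nat.sInf_le hcw
      _ ≤ 2 * k := by omega
  · have hempty : {k | HasCW k G} = ∅ := by
      ext j
      simp only [Set.mem_setOf_eq, Set.mem_empty_iff_false, iff_false]
      rintro ⟨W, H, lab, hb, ⟨iso⟩⟩
      exact hV ⟨iso.toEquiv.symm hb.nonempty.some⟩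
    show sInf {k | HasCW k G} ≤ 2 * k
    rw [hempty, Nat.sInf_empty]
    omega
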